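/- Helstrom bound in Bloch form (Eq. (19)): Let q : Fin 2 → ℝ be priors with q 0 ≥ q 1, and let v : Fin 2 → EuclideanSpace ℝ (Fin 3) with ‖v i‖ ≤ 1. If ‖q 0 • v 0 − q 1 • v 1‖ ≥ q 0 − q 1, then (1/2) * (q 0 + q 1 + ‖q 0 • v 0 − q 1 • v 1‖) is the greatest element of the set of success probabilities {P(M) : M a 2-outcome POVM}. -/

import Mathlib

open Matrix Complex Finset RealInnerProductSpace
open scoped ComplexOrder

/-- The first Pauli matrix. -/
noncomputable def pauli1 : Matrix (Fin 2) (Fin 2) ℂ := !![0, 1; 1, 0]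

/-- The second Pauli matrix. -/
noncomputable def pauli2 : Matrix (Fin 2) (Fin 2) ℂ := !![0, -Complex.I; Complex.I, 0]

/-- The third Pauli matrix. -/
noncomputable def pauli3 : Matrix (Fin 2) (Fin 2) ℂ := !![1, 0; 0, -1]

/-- The operator `v ⬝ σ` for a Bloch vector `v`. -/
noncomputable def blochOp (v : EuclideanSpace ℝ (Fin 3)) : Matrix (Fin 2) (Fin 2) ℂ :=
  (v 0 : ℂ) • pauli1 + (v 1 : ℂ) • pauli2 + (v 2 : ℂ) • pauli3

/-- The qubit state with Bloch vector `v`. -/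
noncomputable def qubitState (v : EuclideanSpace ℝ (Fin 3)) : Matrix (Fin 2) (Fin 2) ℂ :=
  (1 / 2 : ℂ) • (1 + blochOp v)

/-- An `N`-outcome POVM on `ℂ^d`. -/
def IsPOVM {N d : ℕ} (M : Fin N → Matrix (Fin d) (Fin d) ℂ) : Prop :=
  (∀ i, (M i).PosSemidef) ∧ ∑ i, M i = 1

/-- Priors: a probability distribution. -/
def IsPriors {N : ℕ} (q : Fin N → ℝ) : Prop :=
  (∀ i, 0 ≤ q i) ∧ ∑ i, q i = 1

/-- Success probability of the POVM `M` for qubit states with Bloch vectors `v`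
and priors `q`. -/
noncomputable def succProb {N : ℕ} (q : Fin N → ℝ) (v : Fin N → EuclideanSpace ℝ (Fin 3))
    (M : Fin N → Matrix (Fin 2) (Fin 2) ℂ) : ℝ :=
  ∑ i, q i * (Matrix.trace (qubitState (v i) * M i)).re

/-- The geometric KKT conditions for `(q, v)` satisfied by `(r, w)`. -/
def GeomKKT {N : ℕ} (q : Fin N → ℝ) (v : Fin N → EuclideanSpace ℝ (Fin 3))
    (r : Fin N → ℝ) (w : Fin N → EuclideanSpace ℝ (Fin 3)) : Prop :=
  (∀ i j, r i • w i - r j • w j = q j • v j - q i • v i) ∧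
  (∃ p : Fin N → ℝ, (∀ i, 0 < p i) ∧ (∑ i, p i = 1) ∧ (∑ i, p i • w i = 0)) ∧
  (∀ i, ‖w i‖ = 1) ∧
  (∀ i j, r i - r j = q j - q i)


lemma psd_diag_nonneg {n : Type*} [Fintype n] [DecidableEq n] {M : Matrix n n ℂ}
    (hM : M.PosSemidef) (i : n) : 0 ≤ M i i := by
  have := hM.dotProduct_mulVec_nonneg (Pi.single i 1)
  simpa [dotProduct, Matrix.mulVec, Pi.single_apply, Finset.sum_ite_eq,
    mul_ite, ite_mul] using this

lemma psd_trace_re_nonneg {n : Type*} [Fintype n] [DecidableEq n] {M : Matrix n n ℂ}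
    (hM : M.PosSemidef) : 0 ≤ M.trace.re := by
  have h : (0:ℂ) ≤ M.trace := by
    rw [Matrix.trace]
    exact Finset.sum_nonneg fun i _ => psd_diag_nonneg hM i
  simpa using (Complex.le_def.mp h).1

lemma trace_mul_psd_re_nonneg {n : Type*} [Fintype n] [DecidableEq n] {A B : Matrix n n ℂ}
    (hA : A.PosSemidef) (hB : B.PosSemidef) : 0 ≤ ((A * B).trace).re := by
  obtain ⟨C, rfl⟩ : ∃ C : Matrix n n ℂ, A = Cᴴ * C := by
    open scoped MatrixOrder Matrix.Norms.L2Operator in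
    exact CStarAlgebra.nonneg_iff_eq_star_mul_self.mp hA.nonneg
  rw [Matrix.mul_assoc, Matrix.trace_mul_comm]
  exact psd_trace_re_nonneg (hB.mul_mul_conjTranspose_same C)

noncomputable def opOf (a : ℝ) (x : EuclideanSpace ℝ (Fin 3)) : Matrix (Fin 2) (Fin 2) ℂ :=
  (a : ℂ) • 1 + blochOp x

lemma opOf_eq (a : ℝ) (x : EuclideanSpace ℝ (Fin 3)) :
    opOf a x = !![(a : ℂ) + x 2, (x 0 : ℂ) - Complex.I * x 1;
                  (x 0 : ℂ) + Complex.I * x 1, (a : ℂ) - x 2] := by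
  ext i j
  fin_cases i <;> fin_cases j <;>
    simp [opOf, blochOp, pauli1, pauli2, pauli3, Matrix.one_apply] <;> ring

lemma qubitState_eq (v : EuclideanSpace ℝ (Fin 3)) :
    qubitState v = (1 / 2 : ℂ) • opOf 1 v := by
  simp [qubitState, opOf]

lemma trace_opOf (a : ℝ) (x : EuclideanSpace ℝ (Fin 3)) :
    (opOf a x).trace = (2 * a : ℝ) := by
  rw [opOf_eq, Matrix.trace_fin_two]
  simp
  push_cast
  ring

lemma trace_opOf_mul (a b : ℝ) (x y : EuclideanSpace ℝ (Fin 3)) :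
    ((opOf a x) * (opOf b y)).trace
      = ((2 * (a * b + x 0 * y 0 + x 1 * y 1 + x 2 * y 2) : ℝ) : ℂ) := by
  rw [opOf_eq, opOf_eq, Matrix.trace_fin_two]
  simp [Matrix.mul_apply, Fin.sum_univ_two]
  push_cast
  linear_combination (-2 * (x 1 : ℂ) * (y 1 : ℂ)) * Complex.I_sq

noncomputable def proj (u : EuclideanSpace ℝ (Fin 3)) : Matrix (Fin 2) (Fin 2) ℂ :=
  (1 / 2 : ℂ) • opOf 1 u

lemma opOf_conjTranspose (a : ℝ) (x : EuclideanSpace ℝ (Fin 3)) :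
    (opOf a x)ᴴ = opOf a x := by
  rw [opOf_eq]
  ext i j
  fin_cases i <;> fin_cases j <;>
    simp [Matrix.conjTranspose_apply, Complex.ext_iff]

lemma proj_conjTranspose (u : EuclideanSpace ℝ (Fin 3)) : (proj u)ᴴ = proj u := by
  rw [proj, Matrix.conjTranspose_smul, opOf_conjTranspose]
  norm_num

lemma proj_mul_self (u : EuclideanSpace ℝ (Fin 3)) (hu : ‖u‖ = 1) :
    proj u * proj u = proj u := by
  have hsq : (u 0 : ℂ) ^ 2 + (u 1 : ℂ) ^ 2 + (u 2 : ℂ) ^ 2 = 1 := by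
    have h : u 0 ^ 2 + u 1 ^ 2 + u 2 ^ 2 = 1 := by
      have := congrArg (fun t => t ^ 2) hu
      simp only [EuclideanSpace.norm_eq, Real.sq_sqrt (by positivity :
        (0:ℝ) ≤ ∑ i, ‖u i‖ ^ 2), one_pow] at this
      simpa [Fin.sum_univ_three, sq_abs] using this
    have := congrArg Complex.ofReal h
    push_cast at this
    exact this
  rw [proj, Matrix.smul_mul, Matrix.mul_smul, smul_smul, opOf_eq]
  ext i j
  fin_cases i <;> fin_cases j <;>
    · simp [Matrix.mul_apply, Fin.sum_univ_two]
      try ring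
      try linear_combination (1/4 : ℂ) * hsq + (-(1/4) * ((u 1 : ℝ) : ℂ)^2) * Complex.I_sq

lemma proj_posSemidef (u : EuclideanSpace ℝ (Fin 3)) (hu : ‖u‖ = 1) :
    (proj u).PosSemidef := by
  have h := Matrix.posSemidef_conjTranspose_mul_self (proj u)
  rwa [proj_conjTranspose, proj_mul_self u hu] at h

lemma trace_proj (u : EuclideanSpace ℝ (Fin 3)) : (proj u).trace = 1 := by
  rw [proj, Matrix.trace_smul, trace_opOf]
  norm_num

lemma neg_apply' (u : EuclideanSpace ℝ (Fin 3)) (i : Fin 3) : (-u) i = -(u i) := rfl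

lemma smul_apply' (c : ℝ) (u : EuclideanSpace ℝ (Fin 3)) (i : Fin 3) : (c • u) i = c * u i := rfl

lemma sub_smul_apply' (a b : ℝ) (x y : EuclideanSpace ℝ (Fin 3)) (i : Fin 3) :
    (a • x - b • y) i = a * x i - b * y i := rfl

lemma trace_proj_mul_proj_neg (u : EuclideanSpace ℝ (Fin 3)) (hu : ‖u‖ = 1) :
    ((proj (-u)) * (proj u)).trace = 0 := by
  have hsq : u 0 ^ 2 + u 1 ^ 2 + u 2 ^ 2 = 1 := by
    have := congrArg (fun t => t ^ 2) hu
    simp only [EuclideanSpace.norm_eq, Real.sq_sqrt (by positivity :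
      (0:ℝ) ≤ ∑ i, ‖u i‖ ^ 2), one_pow] at this
    simpa [Fin.sum_univ_three, sq_abs] using this
  rw [proj, proj, Matrix.smul_mul, Matrix.mul_smul, Matrix.trace_smul, Matrix.trace_smul,
    trace_opOf_mul]
  simp [neg_apply']
  have hc : ((u 0 : ℝ) : ℂ)^2 + ((u 1 : ℝ) : ℂ)^2 + ((u 2 : ℝ) : ℂ)^2 = 1 := by
    have := congrArg Complex.ofReal hsq
    push_cast at this
    exact this
  linear_combination -hc

lemma trace_qubitState (w : EuclideanSpace ℝ (Fin 3)) : (qubitState w).trace = 1 := by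
  rw [qubitState_eq, Matrix.trace_smul, trace_opOf]
  norm_num

lemma lam_decomp (q : Fin 2 → ℝ) (v : Fin 2 → EuclideanSpace ℝ (Fin 3)) :
    (q 0 : ℂ) • qubitState (v 0) - (q 1 : ℂ) • qubitState (v 1)
      = (1/2 : ℂ) • opOf (q 0 - q 1) (q 0 • v 0 - q 1 • v 1) := by
  rw [qubitState_eq, qubitState_eq, opOf_eq, opOf_eq, opOf_eq]
  ext i j
  fin_cases i <;> fin_cases j <;>
    · simp [sub_smul_apply']
      push_cast
      ring

lemma succProb_eq (q : Fin 2 → ℝ) (v : Fin 2 → EuclideanSpace ℝ (Fin 3))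
    (M : Fin 2 → Matrix (Fin 2) (Fin 2) ℂ) (hM : ∑ i, M i = 1) :
    succProb q v M
      = q 1 + ((((1/2 : ℂ) • opOf (q 0 - q 1) (q 0 • v 0 - q 1 • v 1)) * M 0).trace).re := by
  have hM1 : M 1 = 1 - M 0 := by
    rw [Fin.sum_univ_two] at hM
    rw [← hM]; abel
  rw [← lam_decomp, Matrix.sub_mul, Matrix.smul_mul, Matrix.smul_mul, Matrix.trace_sub,
    Matrix.trace_smul, Matrix.trace_smul]
  unfold succProb
  rw [Fin.sum_univ_two, hM1, Matrix.mul_sub, mul_one, Matrix.trace_sub, trace_qubitState]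
  simp only [smul_eq_mul, Complex.sub_re, Complex.mul_re, Complex.ofReal_re, Complex.ofReal_im,
    Complex.one_re]
  ring

lemma decomp2 (a ap am : ℝ) (x u : EuclideanSpace ℝ (Fin 3))
    (h1 : ap + am = a) (h2 : ∀ i, (ap - am) * u i = x i) :
    (ap : ℂ) • proj u + (am : ℂ) • proj (-u) = (1/2 : ℂ) • opOf a x := by
  have hc1 : ((ap : ℝ) : ℂ) + am = a := by exact_mod_cast h1
  have hc2 : ∀ i, (((ap : ℝ) : ℂ) - am) * ((u i : ℝ) : ℂ) = ((x i : ℝ) : ℂ) := by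
    intro i; exact_mod_cast h2 i
  rw [proj, proj, opOf_eq, opOf_eq, opOf_eq]
  ext i j
  fin_cases i <;> fin_cases j <;>
    · simp [neg_apply']
      first
      | linear_combination (1/2 : ℂ) * hc1 + (1/2 : ℂ) * hc2 2
      | linear_combination (1/2 : ℂ) * hc2 0 - (Complex.I/2) * hc2 1
      | linear_combination (1/2 : ℂ) * hc2 0 + (Complex.I/2) * hc2 1
      | linear_combination (1/2 : ℂ) * hc1 - (1/2 : ℂ) * hc2 2

lemma proj_add_proj_neg (u : EuclideanSpace ℝ (Fin 3)) :
    proj u + proj (-u) = 1 := by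
  rw [proj, proj, opOf_eq, opOf_eq]
  ext i j
  fin_cases i <;> fin_cases j <;>
    · simp [neg_apply', Matrix.one_apply]
      try ring

/-- Helstrom bound in Bloch form (Eq. (19)). -/
theorem helstrom_bound
    (q : Fin 2 → ℝ) (hq : IsPriors q) (hq01 : q 1 ≤ q 0)
    (v : Fin 2 → EuclideanSpace ℝ (Fin 3)) (hv : ∀ i, ‖v i‖ ≤ 1)
    (hcond : q 0 - q 1 ≤ ‖q 0 • v 0 - q 1 • v 1‖) :
    IsGreatest {x | ∃ M : Fin 2 → Matrix (Fin 2) (Fin 2) ℂ, IsPOVM M ∧ succProb q v M = x}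
      ((1 / 2) * (q 0 + q 1 + ‖q 0 • v 0 - q 1 • v 1‖)) := by
  by_cases hd : ‖q 0 • v 0 - q 1 • v 1‖ = 0
  · -- degenerate case
    have hq0eq : q 0 = q 1 := by
      have := hcond
      rw [hd] at this
      linarith
    have hdz : (q 0 • v 0 - q 1 • v 1 : EuclideanSpace ℝ (Fin 3)) = 0 := norm_eq_zero.mp hd
    have h0 : ∀ i, (q 0 • v 0 - q 1 • v 1 : EuclideanSpace ℝ (Fin 3)) i = 0 := by
      intro i; rw [hdz]; rfl
    have hcC : ∀ i, ((q 0 : ℝ) : ℂ) * ((v 0 i : ℝ) : ℂ) - ((q 1 : ℝ) : ℂ) * ((v 1 i : ℝ) : ℂ) = 0 := by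
      intro i
      have := (sub_smul_apply' (q 0) (q 1) (v 0) (v 1) i).symm.trans (h0 i)
      have := congrArg Complex.ofReal this
      push_cast at this
      exact this
    have hqC : ((q 0 : ℝ) : ℂ) - ((q 1 : ℝ) : ℂ) = 0 := by
      rw [hq0eq]; ring
    have hop : opOf (q 0 - q 1) (q 0 • v 0 - q 1 • v 1) = 0 := by
      rw [opOf_eq]
      ext i j
      fin_cases i <;> fin_cases j <;>
        · simp [sub_smul_apply']
          first
          | linear_combination hqC + hcC 2
          | linear_combination hcC 0 - Complex.I * hcC 1
          | linear_combination hcC 0 + Complex.I * hcC 1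
          | linear_combination hqC - hcC 2
    constructor
    · refine ⟨![1, 0], ⟨fun i => by fin_cases i <;>
        simp [Matrix.PosSemidef.one, Matrix.PosSemidef.zero],
        by simp [Fin.sum_univ_two]⟩, ?_⟩
      rw [succProb_eq _ _ _ (by simp [Fin.sum_univ_two])]
      rw [hop, hd]
      simp
      linarith
    · rintro x ⟨M, hM, rfl⟩
      rw [succProb_eq _ _ _ hM.2, hop, hd]
      simp
      linarith
  · have hδpos : 0 < ‖q 0 • v 0 - q 1 • v 1‖ :=
      lt_of_le_of_ne (norm_nonneg _) (Ne.symm hd)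
    set δ : ℝ := ‖q 0 • v 0 - q 1 • v 1‖ with hδdef
    set u : EuclideanSpace ℝ (Fin 3) := δ⁻¹ • (q 0 • v 0 - q 1 • v 1) with hudef
    have hu : ‖u‖ = 1 := by
      rw [hudef, norm_smul, norm_inv, Real.norm_eq_abs, abs_of_pos (by positivity), ← hδdef]
      field_simp
    have hu' : ‖-u‖ = 1 := by rw [norm_neg, hu]
    set lp : ℝ := (q 0 - q 1 + δ)/2 with hlpdef
    set lm : ℝ := (q 0 - q 1 - δ)/2 with hlmdef
    have h1 : lp + lm = q 0 - q 1 := by rw [hlpdef, hlmdef]; ring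
    have h2 : ∀ i, (lp - lm) * u i = (q 0 • v 0 - q 1 • v 1 : EuclideanSpace ℝ (Fin 3)) i := by
      intro i
      have hlpm : lp - lm = δ := by rw [hlpdef, hlmdef]; ring
      rw [hlpm, hudef, smul_apply']
      field_simp
    have hdec := decomp2 (q 0 - q 1) lp lm (q 0 • v 0 - q 1 • v 1) u h1 h2
    have hlm0 : lm ≤ 0 := by rw [hlmdef]; linarith
    have hlp0 : 0 ≤ lp := by rw [hlpdef]; linarith
    constructor
    · refine ⟨![proj u, proj (-u)], ⟨fun i => by fin_cases i <;>
        simp [proj_posSemidef u hu, proj_posSemidef (-u) hu'],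
        by simp [Fin.sum_univ_two, proj_add_proj_neg]⟩, ?_⟩
      rw [succProb_eq _ _ _ (by simp [Fin.sum_univ_two, proj_add_proj_neg])]
      have hM0 : (![proj u, proj (-u)] : Fin 2 → Matrix (Fin 2) (Fin 2) ℂ) 0 = proj u := rfl
      rw [hM0, ← hdec, Matrix.add_mul, Matrix.smul_mul, Matrix.smul_mul, Matrix.trace_add,
        Matrix.trace_smul, Matrix.trace_smul, proj_mul_self u hu, trace_proj,
        trace_proj_mul_proj_neg u hu]
      simp
      ring
    · rintro x ⟨M, hM, rfl⟩
      rw [succProb_eq _ _ _ hM.2, ← hdec, Matrix.add_mul, Matrix.smul_mul, Matrix.smul_mul,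
        Matrix.trace_add, Matrix.trace_smul, Matrix.trace_smul]
      have hM1 : M 1 = 1 - M 0 := by
        have := hM.2
        rw [Fin.sum_univ_two] at this
        rw [← this]; abel
      have htp0 : 0 ≤ ((proj u * M 0).trace).re :=
        trace_mul_psd_re_nonneg (proj_posSemidef u hu) (hM.1 0)
      have htm0 : 0 ≤ ((proj (-u) * M 0).trace).re :=
        trace_mul_psd_re_nonneg (proj_posSemidef (-u) hu') (hM.1 0)
      have htp1 : ((proj u * M 0).trace).re ≤ 1 := by
        have h := trace_mul_psd_re_nonneg (proj_posSemidef u hu) (hM1 ▸ hM.1 1)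
        rw [Matrix.mul_sub, mul_one, Matrix.trace_sub, trace_proj] at h
        simp only [Complex.sub_re, Complex.one_re] at h
        linarith
      simp only [Complex.add_re, smul_eq_mul, Complex.mul_re, Complex.ofReal_re,
        Complex.ofReal_im, zero_mul, sub_zero]
      nlinarith [mul_le_mul_of_nonneg_left htp1 hlp0,
        mul_nonpos_of_nonpos_of_nonneg hlm0 htm0]
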